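/- Let T be a bounded linear operator with closed range between Hilbert spaces, and for ω > 0 let R_ω = T*(ω·1 + T T*)⁻¹. Then R_ω converges to the Moore–Penrose inverse T† in the strong operator topology (indeed in operator norm) as ω → 0⁺. -/

import Mathlib

open ContinuousLinearMap

/-- `S` is a Moore–Penrose inverse of `T`: the four Penrose equations. -/
def IsMoorePenrose {H K : Type*} [NormedAddCommGroup H] [InnerProductSpace ℂ H]
    [CompleteSpace H] [NormedAddCommGroup K] [InnerProductSpace ℂ K] [CompleteSpace K]
    (T : H →L[ℂ] K) (S : K →L[ℂ] H) : Prop :=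
  T ∘L S ∘L T = T ∧ S ∘L T ∘L S = S ∧
    adjoint (T ∘L S) = T ∘L S ∧ adjoint (S ∘L T) = S ∘L T

section Aux

variable {H K : Type*} [NormedAddCommGroup H] [InnerProductSpace ℂ H] [CompleteSpace H]
  [NormedAddCommGroup K] [InnerProductSpace ℂ K] [CompleteSpace K]

lemma tikhonov_key (T : H →L[ℂ] K) (Td : K →L[ℂ] H) (hTd : IsMoorePenrose T Td)
    {ω : ℝ} (hω : 0 < ω) :
    ‖adjoint T ∘L Ring.inverse ((ω : ℂ) • (1 : K →L[ℂ] K) + T ∘L adjoint T) - Td‖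
      ≤ 2 * ‖Td‖ ^ 3 * ω := by
  set A : K →L[ℂ] K := (ω : ℂ) • (1 : K →L[ℂ] K) + T ∘L adjoint T with hA
  -- coercivity
  have h2 : ∀ x : K, (inner ℂ ((T ∘L adjoint T) x) x : ℂ) = ((‖adjoint T x‖ ^ 2 : ℝ) : ℂ) := by
    intro x
    have e1 := ContinuousLinearMap.adjoint_inner_left (adjoint T) x (adjoint T x)
    rw [ContinuousLinearMap.adjoint_adjoint] at e1
    rw [ContinuousLinearMap.comp_apply, e1, inner_self_eq_norm_sq_to_K]
    norm_cast
  have hcoer : ∀ x : K, ‖x‖ ^ 2 * ω ≤ ‖(inner ℂ (A x) x : ℂ)‖ := by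
    intro x
    have h1 : (inner ℂ (A x) x : ℂ) = ((ω * ‖x‖ ^ 2 + ‖adjoint T x‖ ^ 2 : ℝ) : ℂ) := by
      rw [hA, ContinuousLinearMap.add_apply, ContinuousLinearMap.smul_apply,
        ContinuousLinearMap.one_apply, inner_add_left, inner_smul_left, h2 x,
        inner_self_eq_norm_sq_to_K, Complex.conj_ofReal]
      simp
    rw [h1, Complex.norm_real, Real.norm_eq_abs]
    have h3 : ω * ‖x‖ ^ 2 ≤ |ω * ‖x‖ ^ 2 + ‖adjoint T x‖ ^ 2| := by
      rw [abs_of_nonneg (by positivity)]; nlinarith [sq_nonneg ‖adjoint T x‖]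
    linarith [mul_comm ω (‖x‖ ^ 2)]
  have hu : IsUnit A := isUnit_of_forall_le_norm_inner_map A (c := ⟨ω, hω.le⟩) hω hcoer
  set B : K →L[ℂ] K := Ring.inverse A with hB
  have hAB : A ∘L B = 1 := Ring.mul_inverse_cancel A hu
  -- norm bound for B
  have hBnorm : ‖B‖ ≤ ω⁻¹ := by
    refine ContinuousLinearMap.opNorm_le_bound B (by positivity) fun y => ?_
    have hx : A (B y) = y := by
      have := congrArg (fun f : K →L[ℂ] K => f y) hAB
      simpa using this
    have h1 : ‖B y‖ ^ 2 * ω ≤ ‖A (B y)‖ * ‖B y‖ :=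
      (hcoer (B y)).trans (norm_inner_le_norm _ _)
    rw [hx] at h1
    rcases eq_or_ne (B y) 0 with h0 | h0
    · rw [h0, norm_zero]; positivity
    · have hb : 0 < ‖B y‖ := norm_pos_iff.mpr h0
      rw [inv_mul_eq_div, le_div_iff₀ hω]
      nlinarith
  -- algebraic identities
  obtain ⟨p1, p2, p3, p4⟩ := hTd
  have hTstar : adjoint T = Td ∘L (T ∘L adjoint T) := by
    conv_lhs => rw [← p1]
    rw [ContinuousLinearMap.adjoint_comp, p4]
    rfl
  have hTd2 : Td = Td ∘L (adjoint Td ∘L adjoint T) := by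
    have h5 : Td ∘L (T ∘L Td) = Td := by rw [← ContinuousLinearMap.comp_assoc]; exact p2
    conv_lhs => rw [← h5]
    rw [← p3, ContinuousLinearMap.adjoint_comp]
  have hTTB : (T ∘L adjoint T) ∘L B = 1 - (ω : ℂ) • B := by
    have h6 : ((ω : ℂ) • (1 : K →L[ℂ] K)) ∘L B + (T ∘L adjoint T) ∘L B = 1 := by
      rw [← ContinuousLinearMap.add_comp, ← hA]; exact hAB
    have h7 : ((ω : ℂ) • (1 : K →L[ℂ] K)) ∘L B = (ω : ℂ) • B := by ext y; simp
    rw [h7] at h6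
    linear_combination (norm := module) h6
  set R : K →L[ℂ] H := adjoint T ∘L B with hR
  have hRTd : R = Td - (ω : ℂ) • (Td ∘L B) := by
    rw [hR]
    conv_lhs => rw [hTstar]
    rw [ContinuousLinearMap.comp_assoc, hTTB]
    ext y; simp
  have hTdB : Td ∘L B = Td ∘L (adjoint Td ∘L R) := by
    conv_lhs => rw [hTd2]
    rw [ContinuousLinearMap.comp_assoc, ContinuousLinearMap.comp_assoc, ← hR]
  have key : R - Td = (-(ω : ℂ)) • (Td ∘L (adjoint Td ∘L R)) := by
    conv_lhs => rw [hRTd, hTdB]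
    module
  -- norm estimates
  have hRnorm : ‖R‖ ≤ 2 * ‖Td‖ := by
    calc ‖R‖ ≤ ‖Td‖ + ‖(ω : ℂ) • (Td ∘L B)‖ := by rw [hRTd]; exact norm_sub_le _ _
      _ ≤ ‖Td‖ + ω * (‖Td‖ * ω⁻¹) := by
          rw [norm_smul ((ω : ℂ)) (Td ∘L B), Complex.norm_real, Real.norm_eq_abs,
            abs_of_pos hω]
          gcongr
          exact (ContinuousLinearMap.opNorm_comp_le _ _).trans (by gcongr)
      _ ≤ 2 * ‖Td‖ := by
          rw [mul_comm ‖Td‖ ω⁻¹, ← mul_assoc, mul_inv_cancel₀ hω.ne', one_mul]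
          linarith
  have hTdadj : ‖adjoint Td‖ = ‖Td‖ := LinearIsometryEquiv.norm_map adjoint Td
  calc ‖R - Td‖ = ω * ‖Td ∘L (adjoint Td ∘L R)‖ := by
        rw [key, norm_smul (-(ω : ℂ)) (Td ∘L (adjoint Td ∘L R)), norm_neg,
          Complex.norm_real, Real.norm_eq_abs, abs_of_pos hω]
    _ ≤ ω * (‖Td‖ * (‖Td‖ * (2 * ‖Td‖))) := by
        gcongr
        refine (ContinuousLinearMap.opNorm_comp_le _ _).trans ?_
        gcongr
        refine (ContinuousLinearMap.opNorm_comp_le _ _).trans ?_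
        rw [hTdadj]
        gcongr
    _ = 2 * ‖Td‖ ^ 3 * ω := by ring

end Aux

theorem tikhonov_approximation_of_mp
    {H K : Type*} [NormedAddCommGroup H] [InnerProductSpace ℂ H] [CompleteSpace H]
    [NormedAddCommGroup K] [InnerProductSpace ℂ K] [CompleteSpace K]
    (T : H →L[ℂ] K) (hT : IsClosed (Set.range T))
    (Td : K →L[ℂ] H) (hTd : IsMoorePenrose T Td) :
    Filter.Tendsto
      (fun ω : ℝ => ‖adjoint T ∘L Ring.inverse ((ω : ℂ) • (1 : K →L[ℂ] K) + T ∘L adjoint T) - Td‖)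
      (nhdsWithin 0 (Set.Ioi 0)) (nhds 0) := by
  have htend : Filter.Tendsto (fun ω : ℝ => 2 * ‖Td‖ ^ 3 * ω)
      (nhdsWithin 0 (Set.Ioi 0)) (nhds 0) := by
    have h1 : Filter.Tendsto (fun ω : ℝ => 2 * ‖Td‖ ^ 3 * ω) (nhds 0)
        (nhds (2 * ‖Td‖ ^ 3 * 0)) := Filter.Tendsto.const_mul _ Filter.tendsto_id
    rw [mul_zero] at h1
    exact h1.mono_left nhdsWithin_le_nhds
  refine squeeze_zero' ?_ ?_ htend
  · filter_upwards with ω using norm_nonneg _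
  · filter_upwards [self_mem_nhdsWithin] with ω hω using tikhonov_key T Td hTd hω
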